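/- Let 𝕜, V = V_1 ⊕ ... ⊕ V_n, W_j, e and e_0 be as in the context. Suppose that for each k = 1,...,n, F^{(k)}_• is a full flag of V_k satisfying e_0(F^{(k)}_d) ⊆ F^{(k)}_{d-1} for all d ≥ 1. Then F̄_• = LS(F^{(1)}_•,...,F^{(n)}_•) is a full flag of V (in particular dim F̄_i = i for all i) and satisfies e(F̄_i) ⊆ F̄_{i-1} for all i ≥ 1; that is, F̄_• lies in the Springer fibre of e. -/

import Mathlib

section LinearDefs

variable {𝕜 V : Type*} [Field 𝕜] [AddCommGroup V] [Module 𝕜 V]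

/-- A full flag `0 = F 0 ⊂ F 1 ⊂ ... ⊂ F N = V` of an `N`-dimensional space. -/
structure IsFullFlag (N : ℕ) (F : ℕ → Submodule 𝕜 V) : Prop where
  mono : Monotone F
  bot : F 0 = ⊥
  top : F N = ⊤
  dim : ∀ i ≤ N, Module.finrank 𝕜 ↥(F i) = i

/-- A full flag `0 = F 0 ⊂ F 1 ⊂ ... ⊂ F l = U` of an `l`-dimensional subspace `U ⊆ V`. -/
structure IsFlagOf (U : Submodule 𝕜 V) (l : ℕ) (F : ℕ → Submodule 𝕜 V) : Prop where
  mono : Monotone F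
  le : ∀ d, F d ≤ U
  bot : F 0 = ⊥
  top : F l = U
  dim : ∀ d ≤ l, Module.finrank 𝕜 ↥(F d) = d

/-- `V = V_0 ⊕ ... ⊕ V_{n-1}` is an internal direct sum decomposition with
`dim V_k = lam k`. -/
structure IsDecomp (n : ℕ) (lam : ℕ → ℕ) (Vsub : ℕ → Submodule 𝕜 V) : Prop where
  dim : ∀ k < n, Module.finrank 𝕜 ↥(Vsub k) = lam k
  indep : ∀ k < n, Disjoint (Vsub k) (∑ l ∈ (Finset.range n).erase k, Vsub l)
  total : ∑ k ∈ Finset.range n, Vsub k = ⊤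

/-- Partial sums `lam 0 + ... + lam (k-1)`. -/
def pSum (lam : ℕ → ℕ) (k : ℕ) : ℕ := ∑ l ∈ Finset.range k, lam l

/-- For `1 ≤ i`, the (0-indexed) index `j` of the block containing position `i`, i.e. the
largest `j ≤ n` with `lam 0 + ... + lam (j-1) < i`. -/
def LSidx (n : ℕ) (lam : ℕ → ℕ) (i : ℕ) : ℕ :=
  Nat.findGreatest (fun j => pSum lam j < i) n

/-- The Lusztig–Spaltenstein flag: `F̄ i = W_{j-1} + F j d` where `j = LSidx n lam i` is the
block containing position `i`, `W_{j-1} = V_0 + ... + V_{j-1}` and `d = i - (lam 0 + ... + lam (j-1))`. -/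
def LSflag (n : ℕ) (lam : ℕ → ℕ) (Vsub : ℕ → Submodule 𝕜 V)
    (F : ℕ → ℕ → Submodule 𝕜 V) (i : ℕ) : Submodule 𝕜 V :=
  (∑ k ∈ Finset.range (LSidx n lam i), Vsub k) +
    F (LSidx n lam i) (i - pSum lam (LSidx n lam i))

end LinearDefs

section LSHelpers

variable {𝕜 V : Type*} [Field 𝕜] [AddCommGroup V] [Module 𝕜 V]

lemma pSum_mono (lam : ℕ → ℕ) : Monotone (pSum lam) := fun _ _ h =>
  Finset.sum_le_sum_of_subset (Finset.range_subset_range.2 h)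

lemma pSum_succ (lam : ℕ → ℕ) (j : ℕ) : pSum lam (j + 1) = pSum lam j + lam j :=
  Finset.sum_range_succ _ _

lemma LSidx_eq (n : ℕ) (lam : ℕ → ℕ) {i j : ℕ} (hj : j ≤ n)
    (h1 : pSum lam j < i) (h2 : i ≤ pSum lam (j + 1)) : LSidx n lam i = j := by
  rw [LSidx, Nat.findGreatest_eq_iff]
  exact ⟨hj, fun _ => h1, fun m hm _ => not_lt.2 (h2.trans (pSum_mono lam hm))⟩

lemma LSidx_spec (n : ℕ) (lam : ℕ → ℕ) {i : ℕ} (hi1 : 1 ≤ i) (hiN : i ≤ pSum lam n) :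
    LSidx n lam i < n ∧ pSum lam (LSidx n lam i) < i ∧ i ≤ pSum lam (LSidx n lam i + 1) := by
  have hP : pSum lam (LSidx n lam i) < i :=
    Nat.findGreatest_spec (P := fun j => pSum lam j < i) (Nat.zero_le n)
      (show pSum lam 0 < i by simp [pSum]; omega)
  have hle : LSidx n lam i ≤ n := Nat.findGreatest_le n
  have hlt : LSidx n lam i < n := by
    rcases lt_or_eq_of_le hle with h | h
    · exact h
    · rw [h] at hP; omega
  refine ⟨hlt, hP, ?_⟩
  have := Nat.findGreatest_is_greatest (P := fun j => pSum lam j < i)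
    (Nat.lt_succ_self (LSidx n lam i)) hlt
  exact not_lt.1 this

end LSHelpers

/-- Given the decomposition `V = V_0 ⊕ ... ⊕ V_{n-1}`, an endomorphism `e`
with `e(V_j) ⊆ W_j` and its block-diagonal part `e0`, and full flags `F k` of each `V_k`
lying in the Springer fibre of `e0`, the Lusztig–Spaltenstein flag `LS(F 0, ..., F (n-1))`
is a full flag of `V` lying in the Springer fibre of `e`. -/
theorem LSflag_mem_springer_fibre
    {𝕜 V : Type*} [Field 𝕜] [AddCommGroup V] [Module 𝕜 V] [FiniteDimensional 𝕜 V]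
    (n : ℕ) (lam : ℕ → ℕ) (hlam : ∀ k < n, 0 < lam k)
    (hdim : Module.finrank 𝕜 V = ∑ k ∈ Finset.range n, lam k)
    (Vsub : ℕ → Submodule 𝕜 V) (hdecomp : IsDecomp n lam Vsub)
    (e e0 : V →ₗ[𝕜] V)
    (he : ∀ j < n, Submodule.map e (Vsub j) ≤ ∑ k ∈ Finset.range (j + 1), Vsub k)
    (he0 : ∀ j < n, ∀ x ∈ Vsub j, e0 x ∈ Vsub j ∧
      e x - e0 x ∈ ∑ k ∈ Finset.range j, Vsub k)
    (F : ℕ → ℕ → Submodule 𝕜 V) (hF : ∀ k < n, IsFlagOf (Vsub k) (lam k) (F k))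
    (hspringer : ∀ k < n, ∀ d, Submodule.map e0 (F k (d + 1)) ≤ F k d) :
    IsFullFlag (∑ k ∈ Finset.range n, lam k) (LSflag n lam Vsub F) ∧
    ∀ i, Submodule.map e (LSflag n lam Vsub F (i + 1)) ≤ LSflag n lam Vsub F i := by
  classical
  by_cases hn : n = 0
  · subst hn
    have hsub : Subsingleton V := by
      have : Module.finrank 𝕜 V = 0 := by simpa using hdim
      exact Module.finrank_zero_iff.mp this
    have hsm : Subsingleton (Submodule 𝕜 V) := (Submodule.subsingleton_iff 𝕜).2 hsub
    have hball : ∀ p : Submodule 𝕜 V, p = ⊥ := fun p => Subsingleton.elim _ _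
    constructor
    · refine ⟨fun a b _ => le_of_eq (Subsingleton.elim _ _), Subsingleton.elim _ _,
        Subsingleton.elim _ _, ?_⟩
      intro i hi
      interval_cases i
      rw [hball (LSflag 0 lam Vsub F 0)]
      simp
    · intro i
      rw [hball (LSflag 0 lam Vsub F (i + 1)), Submodule.map_bot]
      exact bot_le
  have hn1 : 0 < n := Nat.pos_of_ne_zero hn
  set W : ℕ → Submodule 𝕜 V := fun j => ∑ k ∈ Finset.range j, Vsub k with hW
  have hW0 : W 0 = ⊥ := by simp [hW]
  have hWsucc : ∀ j, W (j + 1) = W j ⊔ Vsub j := by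
    intro j
    simp [hW, Finset.sum_range_succ, Submodule.add_eq_sup]
  have hWn : W n = ⊤ := hdecomp.total
  have hdisj : ∀ j < n, Disjoint (W j) (Vsub j) := by
    intro j hj
    refine ((hdecomp.indep j hj).mono_right ?_).symm
    refine Finset.sum_le_sum_of_subset ?_
    intro k hk
    simp only [Finset.mem_range] at hk
    simp only [Finset.mem_erase, Finset.mem_range]
    omega
  have hWdim : ∀ j ≤ n, Module.finrank 𝕜 ↥(W j) = pSum lam j := by
    intro j
    induction j with
    | zero => intro _; simp [hW0, pSum]
    | succ j ih =>
      intro hj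
      have hjn : j < n := hj
      have hinf : W j ⊓ Vsub j = ⊥ := (hdisj j hjn).eq_bot
      have hsum := Submodule.finrank_sup_add_finrank_inf_eq (W j) (Vsub j)
      rw [hinf, finrank_bot] at hsum
      rw [hWsucc j, pSum_succ]
      have h1 := ih hjn.le
      have h2 := hdecomp.dim j hjn
      omega
  have heW : ∀ j ≤ n, Submodule.map e (W j) ≤ W j := by
    intro j hj
    induction j with
    | zero => rw [hW0, Submodule.map_bot]
    | succ j ih =>
      have hjn : j < n := hj
      have hsum : (∑ k ∈ Finset.range (j + 1), Vsub k) = W (j + 1) := rfl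
      rw [hWsucc j, Submodule.map_sup]
      exact sup_le ((ih hjn.le).trans le_sup_left)
        ((he j hjn).trans (hsum.trans (hWsucc j)).le)
  have hflag_eq : ∀ i j, j < n → pSum lam j < i → i ≤ pSum lam (j + 1) →
      LSflag n lam Vsub F i = W j ⊔ F j (i - pSum lam j) := by
    intro i j hj h1 h2
    rw [LSflag, LSidx_eq n lam hj.le h1 h2, Submodule.add_eq_sup]
  have hidx0 : LSidx n lam 0 = 0 := by
    rw [LSidx, Nat.findGreatest_eq_iff]
    exact ⟨Nat.zero_le n, fun h => absurd rfl h, fun m _ _ => by omega⟩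
  have hbot : LSflag n lam Vsub F 0 = ⊥ := by
    rw [LSflag, hidx0, Submodule.add_eq_sup]
    simp [pSum, (hF 0 hn1).bot]
  have hNpos : 0 < pSum lam n := by
    have h0 := hlam 0 hn1
    have hm : pSum lam 1 ≤ pSum lam n := pSum_mono lam hn1
    have h1 : pSum lam 1 = lam 0 := by simp [pSum]
    omega
  have htop : ∀ i, pSum lam n ≤ i → LSflag n lam Vsub F i = ⊤ := by
    intro i hNi
    rcases eq_or_lt_of_le hNi with h | h
    · have hi1 : 1 ≤ i := by omega
      obtain ⟨hjn, h1, h2⟩ := LSidx_spec n lam hi1 h.ge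
      set j := LSidx n lam i with hj
      have hjeq : j + 1 = n := by
        by_contra hne
        have hj2 : j + 2 ≤ n := by omega
        have hm := pSum_mono lam hj2
        rw [pSum_succ, pSum_succ] at hm
        have hl := hlam (j + 1) (by omega)
        rw [pSum_succ] at h2
        omega
      have hd : i - pSum lam j = lam j := by
        have : pSum lam (j + 1) = pSum lam n := by rw [hjeq]
        rw [pSum_succ] at this h2
        omega
      rw [hflag_eq i j hjn h1 h2, hd, (hF j hjn).top, ← hWsucc j, hjeq, hWn]
    · have hidx : LSidx n lam i = n := by
        rw [LSidx, Nat.findGreatest_eq_iff]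
        exact ⟨le_refl n, fun _ => h, fun m hm hmn => absurd hm (by omega)⟩
      rw [LSflag, hidx, Submodule.add_eq_sup, eq_top_iff, ← hWn]
      exact le_sup_left
  have hboundary : ∀ i j, j < n → pSum lam j < i → i = pSum lam (j + 1) →
      LSflag n lam Vsub F i = W (j + 1) := by
    intro i j hjn h1 h2
    have hd : i - pSum lam j = lam j := by rw [pSum_succ] at h2; omega
    rw [hflag_eq i j hjn h1 h2.le, hd, (hF j hjn).top, hWsucc j]
  have hcore : ∀ j, j < n → ∀ d, Submodule.map e (W j ⊔ F j (d + 1)) ≤ W j ⊔ F j d := by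
    intro j hjn d
    rw [Submodule.map_sup]
    refine sup_le ((heW j hjn.le).trans le_sup_left) ?_
    intro y hy
    obtain ⟨x, hx, rfl⟩ := Submodule.mem_map.mp hy
    have hxV : x ∈ Vsub j := (hF j hjn).le _ hx
    obtain ⟨-, heW0⟩ := he0 j hjn x hxV
    have he0F : e0 x ∈ F j d := hspringer j hjn d ⟨x, hx, rfl⟩
    have hxe : e x = (e x - e0 x) + e0 x := by abel
    rw [hxe]
    exact Submodule.add_mem_sup heW0 he0F
  have hmono : Monotone (LSflag n lam Vsub F) := by
    apply monotone_nat_of_le_succ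
    intro i
    rcases Nat.eq_zero_or_pos i with rfl | hi1
    · rw [hbot]; exact bot_le
    rcases le_or_gt (pSum lam n) i with hNi | hiN
    · rw [htop i hNi, htop (i + 1) (hNi.trans (Nat.le_succ i))]
    obtain ⟨hjn, h1, h2⟩ := LSidx_spec n lam hi1 hiN.le
    set j := LSidx n lam i with hj
    rcases lt_or_eq_of_le h2 with h2' | h2'
    · rw [hflag_eq i j hjn h1 h2, hflag_eq (i + 1) j hjn (by omega) (by omega)]
      exact sup_le_sup_left ((hF j hjn).mono (by omega)) _
    · have hj1n : j + 1 < n := by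
        by_contra hcon
        have hje : j + 1 = n := by omega
        rw [hje] at h2'
        omega
      rw [hboundary i j hjn h1 h2',
        hflag_eq (i + 1) (j + 1) hj1n (by omega)
          (by rw [pSum_succ (lam := lam) (j := j + 1)]; have := hlam (j + 1) hj1n; omega)]
      exact le_sup_left
  have hsprC : ∀ i, Submodule.map e (LSflag n lam Vsub F (i + 1)) ≤ LSflag n lam Vsub F i := by
    intro i
    rcases le_or_gt (pSum lam n) i with hNi | hiN
    · rw [htop i hNi]; exact le_top
    rcases Nat.eq_zero_or_pos i with rfl | hi1
    · have h2 : 1 ≤ pSum lam (0 + 1) := by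
        rw [pSum_succ]
        have := hlam 0 hn1
        omega
      have h1 : pSum lam 0 < 1 := by simp [pSum]
      rw [hflag_eq 1 0 hn1 h1 h2, hbot]
      have hd : 1 - pSum lam 0 = 0 + 1 := by simp [pSum]
      rw [hd]
      refine (hcore 0 hn1 0).trans ?_
      rw [hW0, (hF 0 hn1).bot]
      simp
    obtain ⟨hjn, h1, h2⟩ := LSidx_spec n lam hi1 hiN.le
    set j := LSidx n lam i with hj
    rcases lt_or_eq_of_le h2 with h2' | h2'
    · rw [hflag_eq i j hjn h1 h2, hflag_eq (i + 1) j hjn (by omega) (by omega)]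
      have hd : i + 1 - pSum lam j = (i - pSum lam j) + 1 := by omega
      rw [hd]
      exact hcore j hjn _
    · have hj1n : j + 1 < n := by
        by_contra hcon
        have hje : j + 1 = n := by omega
        rw [hje] at h2'
        omega
      rw [hboundary i j hjn h1 h2',
        hflag_eq (i + 1) (j + 1) hj1n (by omega)
          (by rw [pSum_succ (lam := lam) (j := j + 1)]; have := hlam (j + 1) hj1n; omega)]
      have hd : i + 1 - pSum lam (j + 1) = 0 + 1 := by omega
      rw [hd]
      refine (hcore (j + 1) hj1n 0).trans ?_
      rw [(hF (j + 1) hj1n).bot]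
      simp
  have hNdef : ∑ k ∈ Finset.range n, lam k = pSum lam n := rfl
  refine ⟨⟨hmono, hbot, ?_, ?_⟩, hsprC⟩
  · rw [hNdef]; exact htop _ le_rfl
  · intro i hi
    rw [hNdef] at hi
    rcases Nat.eq_zero_or_pos i with rfl | hi1
    · rw [hbot]; exact finrank_bot 𝕜 V
    obtain ⟨hjn, h1, h2⟩ := LSidx_spec n lam hi1 hi
    set j := LSidx n lam i with hj
    rw [hflag_eq i j hjn h1 h2]
    have hinf : W j ⊓ F j (i - pSum lam j) = ⊥ :=
      ((hdisj j hjn).mono_right ((hF j hjn).le _)).eq_bot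
    have hsum := Submodule.finrank_sup_add_finrank_inf_eq (W j) (F j (i - pSum lam j))
    rw [hinf, finrank_bot] at hsum
    have h3 := hWdim j hjn.le
    have h4 := (hF j hjn).dim (i - pSum lam j) (by rw [pSum_succ] at h2; omega)
    omega
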